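/- Let V and W be finite-dimensional complex vector spaces with positively weighted linear ℂ×-actions, and let X ⊆ V, Y ⊆ W be nonempty closed ℂ×-invariant cones. Then (X × Y) \ {(0,0)} contains the join S(X) * S(Y) as a deformation retract, where S(X), S(Y) are the intersections with unit spheres for invariant Hermitian metrics. -/

import Mathlib

/-- The linear `ℂ×`-action on `ℂ^m` with (positive) weights `w`. -/
noncomputable def wAct {m : ℕ} (w : Fin m → ℕ) (t : ℂ) (v : EuclideanSpace ℂ (Fin m)) :
    EuclideanSpace ℂ (Fin m) := WithLp.toLp 2 (fun i => t ^ w i * v i)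

namespace JoinDR

variable {m : ℕ}

lemma wAct_one (w : Fin m → ℕ) (v : EuclideanSpace ℂ (Fin m)) : wAct w 1 v = v := by
  ext i; simp [wAct, PiLp.toLp_apply]

lemma wAct_mul (w : Fin m → ℕ) (s t : ℂ) (v : EuclideanSpace ℂ (Fin m)) :
    wAct w (s * t) v = wAct w s (wAct w t v) := by
  ext i; simp [wAct, PiLp.toLp_apply, mul_pow]; ring

lemma wAct_zero (w : Fin m → ℕ) (hw : ∀ i, 1 ≤ w i) (v : EuclideanSpace ℂ (Fin m)) :
    wAct w 0 v = 0 := by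
  ext i
  simp [wAct, PiLp.toLp_apply, zero_pow (show w i ≠ 0 by have := hw i; omega)]

lemma wAct_ne_zero (w : Fin m → ℕ) {t : ℂ} (ht : t ≠ 0)
    {v : EuclideanSpace ℂ (Fin m)} (hv : v ≠ 0) : wAct w t v ≠ 0 := by
  intro h
  apply hv
  have := congrArg (wAct w t⁻¹) h
  rw [← wAct_mul, inv_mul_cancel₀ ht, wAct_one] at this
  rw [this]
  ext i
  simp [wAct, PiLp.toLp_apply]

lemma continuous_wAct (w : Fin m → ℕ) :
    Continuous fun p : ℂ × EuclideanSpace ℂ (Fin m) => wAct w p.1 p.2 := by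
  unfold wAct
  apply (PiLp.continuous_toLp 2 _).comp
  apply continuous_pi
  intro i
  exact ((continuous_fst.pow _).mul ((PiLp.continuous_apply 2 _ i).comp continuous_snd))

lemma norm_wAct_mono (w : Fin m → ℕ) {c c' : ℝ} (h0 : 0 ≤ c) (h : c ≤ c')
    (v : EuclideanSpace ℂ (Fin m)) : ‖wAct w (c : ℂ) v‖ ≤ ‖wAct w (c' : ℂ) v‖ := by
  rw [EuclideanSpace.norm_eq, EuclideanSpace.norm_eq]
  apply Real.sqrt_le_sqrt
  apply Finset.sum_le_sum
  intro i _
  have h1 : ‖(wAct w (c : ℂ) v) i‖ ≤ ‖(wAct w (c' : ℂ) v) i‖ := by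
    simp only [wAct, PiLp.toLp_apply, norm_mul, norm_pow, Complex.norm_real, Real.norm_eq_abs,
      abs_of_nonneg h0, abs_of_nonneg (h0.trans h)]
    exact mul_le_mul_of_nonneg_right (pow_le_pow_left₀ h0 h _) (norm_nonneg _)
  exact pow_le_pow_left₀ (norm_nonneg _) h1 2

lemma le_norm_wAct (w : Fin m → ℕ) (hw : ∀ i, 1 ≤ w i) {c : ℝ} (h : 1 ≤ c)
    (v : EuclideanSpace ℂ (Fin m)) : c * ‖v‖ ≤ ‖wAct w (c : ℂ) v‖ := by
  have hc0 : (0:ℝ) ≤ c := by linarith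
  have key : ∀ i ∈ Finset.univ, c ^ 2 * ‖v i‖ ^ 2 ≤ ‖(wAct w (c : ℂ) v) i‖ ^ 2 := by
    intro i _
    have h1 : c * ‖v i‖ ≤ ‖(wAct w (c : ℂ) v) i‖ := by
      simp only [wAct, PiLp.toLp_apply, norm_mul, norm_pow, Complex.norm_real, Real.norm_eq_abs,
        abs_of_nonneg hc0]
      have : c ≤ c ^ w i := le_self_pow₀ (by linarith) (by have := hw i; omega)
      nlinarith [norm_nonneg (v i)]
    calc c ^ 2 * ‖v i‖ ^ 2 = (c * ‖v i‖) ^ 2 := by ring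
      _ ≤ ‖(wAct w (c : ℂ) v) i‖ ^ 2 := pow_le_pow_left₀ (by positivity) h1 2
  have h2 := Real.sqrt_le_sqrt (Finset.sum_le_sum key)
  have h3 : c * ‖v‖ = Real.sqrt (∑ i, c ^ 2 * ‖v i‖ ^ 2) := by
    rw [EuclideanSpace.norm_eq, ← Finset.mul_sum, Real.sqrt_mul (by positivity),
      Real.sqrt_sq hc0]
  rw [h3, EuclideanSpace.norm_eq]
  exact h2

variable {n : ℕ}

noncomputable def njoint (w : Fin m → ℕ) (w' : Fin n → ℕ)
    (z : EuclideanSpace ℂ (Fin m) × EuclideanSpace ℂ (Fin n)) (s : ℝ) : ℝ :=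
  max ‖wAct w (s : ℂ) z.1‖ ‖wAct w' (s : ℂ) z.2‖

lemma continuous_njoint_left (w : Fin m → ℕ) (w' : Fin n → ℕ) (r : ℝ) :
    Continuous fun z : EuclideanSpace ℂ (Fin m) × EuclideanSpace ℂ (Fin n) =>
      njoint w w' z r := by
  unfold njoint
  exact (((continuous_wAct w).comp (continuous_const.prodMk continuous_fst)).norm).max
    (((continuous_wAct w').comp (continuous_const.prodMk continuous_snd)).norm)

lemma continuous_njoint_right (w : Fin m → ℕ) (w' : Fin n → ℕ)
    (z : EuclideanSpace ℂ (Fin m) × EuclideanSpace ℂ (Fin n)) :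
    Continuous fun s : ℝ => njoint w w' z s := by
  unfold njoint
  exact (((continuous_wAct w).comp (Complex.continuous_ofReal.prodMk continuous_const)).norm).max
    (((continuous_wAct w').comp (Complex.continuous_ofReal.prodMk continuous_const)).norm)

lemma njoint_zero (w : Fin m → ℕ) (w' : Fin n → ℕ) (hw : ∀ i, 1 ≤ w i)
    (hw' : ∀ i, 1 ≤ w' i) (z) : njoint w w' z 0 = 0 := by
  simp [njoint, Complex.ofReal_zero, wAct_zero w hw, wAct_zero w' hw']

lemma njoint_mono (w : Fin m → ℕ) (w' : Fin n → ℕ) (z) {c c' : ℝ} (h0 : 0 ≤ c)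
    (h : c ≤ c') : njoint w w' z c ≤ njoint w w' z c' :=
  max_le_max (norm_wAct_mono w h0 h _) (norm_wAct_mono w' h0 h _)

lemma njoint_scale (w : Fin m → ℕ) (w' : Fin n → ℕ) (hw : ∀ i, 1 ≤ w i)
    (hw' : ∀ i, 1 ≤ w' i) (z) {c s : ℝ} (hc : 1 ≤ c) :
    c * njoint w w' z s ≤ njoint w w' z (c * s) := by
  have h1 : ((c * s : ℝ) : ℂ) = (c : ℂ) * (s : ℂ) := by push_cast; ring
  have e1 : wAct w ((c * s : ℝ) : ℂ) z.1 = wAct w (c : ℂ) (wAct w (s : ℂ) z.1) := by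
    rw [h1, wAct_mul]
  have e2 : wAct w' ((c * s : ℝ) : ℂ) z.2 = wAct w' (c : ℂ) (wAct w' (s : ℂ) z.2) := by
    rw [h1, wAct_mul]
  have e3 : njoint w w' z (c * s) =
      max ‖wAct w (c : ℂ) (wAct w (s : ℂ) z.1)‖ ‖wAct w' (c : ℂ) (wAct w' (s : ℂ) z.2)‖ := by
    rw [njoint, e1, e2]
  rw [e3, njoint, mul_max_of_nonneg _ _ (by linarith : (0:ℝ) ≤ c)]
  exact max_le_max (le_norm_wAct w hw hc _) (le_norm_wAct w' hw' hc _)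

lemma njoint_pos (w : Fin m → ℕ) (w' : Fin n → ℕ) {z} (hz : z ≠ 0) {s : ℝ} (hs : 0 < s) :
    0 < njoint w w' z s := by
  have hz1 : z.1 ≠ 0 ∨ z.2 ≠ 0 := by
    by_contra h
    push_neg at h
    exact hz (Prod.ext h.1 h.2)
  have hsC : ((s : ℝ) : ℂ) ≠ 0 := by
    simpa using hs.ne'
  rcases hz1 with h | h
  · exact lt_of_lt_of_le (norm_pos_iff.2 (wAct_ne_zero w hsC h)) (le_max_left _ _)
  · exact lt_of_lt_of_le (norm_pos_iff.2 (wAct_ne_zero w' hsC h)) (le_max_right _ _)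

lemma exists_root (w : Fin m → ℕ) (w' : Fin n → ℕ) (hw : ∀ i, 1 ≤ w i)
    (hw' : ∀ i, 1 ≤ w' i) {z} (hz : z ≠ 0) :
    ∃ s : ℝ, 0 < s ∧ njoint w w' z s = 1 := by
  set a := njoint w w' z 1 with ha
  have hapos : 0 < a := njoint_pos w w' hz one_pos
  set T : ℝ := max 1 a⁻¹ with hT
  have hT1 : 1 ≤ T := le_max_left _ _
  have hTbig : 1 ≤ njoint w w' z T := by
    have := njoint_scale w w' hw hw' z (s := 1) hT1
    rw [mul_one] at this
    refine le_trans ?_ this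
    calc (1:ℝ) = a⁻¹ * a := by field_simp
      _ ≤ T * a := by
          apply mul_le_mul_of_nonneg_right (le_max_right _ _) hapos.le
  have hcont : ContinuousOn (njoint w w' z) (Set.Icc 0 T) :=
    (continuous_njoint_right w w' z).continuousOn
  have hmem : (1:ℝ) ∈ Set.Icc (njoint w w' z 0) (njoint w w' z T) := by
    rw [njoint_zero w w' hw hw']
    exact ⟨zero_le_one, hTbig⟩
  obtain ⟨s, hsmem, hs1⟩ := intermediate_value_Icc (by linarith : (0:ℝ) ≤ T) hcont hmem
  refine ⟨s, ?_, hs1⟩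
  rcases hsmem.1.lt_or_eq with h | h
  · exact h
  · exfalso
    rw [← h, njoint_zero w w' hw hw'] at hs1
    norm_num at hs1

lemma root_unique (w : Fin m → ℕ) (w' : Fin n → ℕ) (hw : ∀ i, 1 ≤ w i)
    (hw' : ∀ i, 1 ≤ w' i) {z} {s s' : ℝ} (hs : 0 < s) (hs' : 0 < s')
    (h1 : njoint w w' z s = 1) (h1' : njoint w w' z s' = 1) : s = s' := by
  have key : ∀ u u' : ℝ, 0 < u → u < u' → njoint w w' z u = 1 → njoint w w' z u' = 1 → False := by
    intro u u' hu huu' e e'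
    have hc : 1 < u' / u := (one_lt_div hu).2 huu'
    have := njoint_scale w w' hw hw' z (c := u' / u) (s := u) hc.le
    rw [div_mul_cancel₀ _ hu.ne', e, e', mul_one] at this
    linarith
  rcases lt_trichotomy s s' with h | h | h
  · exact absurd (key s s' hs h h1 h1') (fun h => h.elim)
  · exact h
  · exact absurd (key s' s hs' h h1' h1) (fun h => h.elim)

open Classical in
noncomputable def sFun (w : Fin m → ℕ) (w' : Fin n → ℕ)
    (z : EuclideanSpace ℂ (Fin m) × EuclideanSpace ℂ (Fin n)) : ℝ :=
  if h : ∃ s : ℝ, 0 < s ∧ njoint w w' z s = 1 then h.choose else 1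

lemma sFun_spec (w : Fin m → ℕ) (w' : Fin n → ℕ) (hw : ∀ i, 1 ≤ w i)
    (hw' : ∀ i, 1 ≤ w' i) {z} (hz : z ≠ 0) :
    0 < sFun w w' z ∧ njoint w w' z (sFun w w' z) = 1 := by
  have h := exists_root w w' hw hw' hz
  rw [sFun, dif_pos h]
  exact h.choose_spec

lemma sFun_eq (w : Fin m → ℕ) (w' : Fin n → ℕ) (hw : ∀ i, 1 ≤ w i)
    (hw' : ∀ i, 1 ≤ w' i) {z} (hz : z ≠ 0) {s : ℝ} (hs : 0 < s)
    (h1 : njoint w w' z s = 1) : sFun w w' z = s := by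
  obtain ⟨hp, he⟩ := sFun_spec w w' hw hw' hz
  exact root_unique w w' hw hw' hp hs he h1

lemma continuousAt_sFun (w : Fin m → ℕ) (w' : Fin n → ℕ) (hw : ∀ i, 1 ≤ w i)
    (hw' : ∀ i, 1 ≤ w' i) {z₀} (hz : z₀ ≠ 0) : ContinuousAt (sFun w w') z₀ := by
  obtain ⟨hs₀, he₀⟩ := sFun_spec w w' hw hw' hz
  set s₀ := sFun w w' z₀ with hs₀def
  rw [ContinuousAt, Metric.tendsto_nhds]
  intro ε hε
  set ε' : ℝ := min ε (s₀ / 2) with hε'def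
  have hε' : 0 < ε' := lt_min hε (by linarith)
  have hε'le : ε' ≤ ε := min_le_left _ _
  have hε's : ε' ≤ s₀ / 2 := min_le_right _ _
  have hlowpos : 0 < s₀ - ε' := by linarith
  -- njoint z₀ (s₀ - ε') < 1
  have hlow : njoint w w' z₀ (s₀ - ε') < 1 := by
    have hc : 1 < s₀ / (s₀ - ε') := (one_lt_div hlowpos).2 (by linarith)
    have := njoint_scale w w' hw hw' z₀ (c := s₀ / (s₀ - ε')) (s := s₀ - ε') hc.le
    rw [div_mul_cancel₀ _ hlowpos.ne', he₀] at this
    by_contra hcon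
    push_neg at hcon
    nlinarith
  -- 1 < njoint z₀ (s₀ + ε')
  have hhigh : 1 < njoint w w' z₀ (s₀ + ε') := by
    have hc : 1 < (s₀ + ε') / s₀ := (one_lt_div hs₀).2 (by linarith)
    have := njoint_scale w w' hw hw' z₀ (c := (s₀ + ε') / s₀) (s := s₀) hc.le
    rw [div_mul_cancel₀ _ hs₀.ne', he₀, mul_one] at this
    linarith
  have c1 := continuous_njoint_left w w' (s₀ - ε')
  have c2 := continuous_njoint_left w w' (s₀ + ε')
  have ev1 : ∀ᶠ z in nhds z₀, njoint w w' z (s₀ - ε') < 1 :=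
    c1.continuousAt.eventually_lt continuousAt_const hlow
  have ev2 : ∀ᶠ z in nhds z₀, 1 < njoint w w' z (s₀ + ε') :=
    continuousAt_const.eventually_lt c2.continuousAt hhigh
  have ev3 : ∀ᶠ z in nhds z₀, z ≠ 0 := by
    exact isOpen_compl_singleton.eventually_mem hz
  filter_upwards [ev1, ev2, ev3] with z h1 h2 h3
  obtain ⟨hszpos, hsze⟩ := sFun_spec w w' hw hw' h3
  set sz := sFun w w' z with hszdef
  have hub : sz < s₀ + ε' := by
    by_contra hcon
    push_neg at hcon
    have := njoint_mono w w' z (by linarith : (0:ℝ) ≤ s₀ + ε') hcon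
    rw [hsze] at this
    linarith
  have hlb : s₀ - ε' < sz := by
    by_contra hcon
    push_neg at hcon
    have := njoint_mono w w' z hszpos.le hcon
    rw [hsze] at this
    linarith
  rw [Real.dist_eq, abs_sub_lt_iff]
  constructor <;> linarith

end JoinDR

open JoinDR in
/-- Let `X ⊆ ℂ^m` and `Y ⊆ ℂ^n` be nonempty closed positively weighted cones.  Then
`(X × Y) \ {(0,0)}` contains the join `S(X) * S(Y)` as a (strong) deformation retract,
where the join is realized inside `X × Y` as the set of pairs `(x, y)` with
`max ‖x‖ ‖y‖ = 1` (which is `(D(X) × S(Y)) ∪ (S(X) × D(Y)) ≅ (CS(X) × S(Y)) ∪ (S(X) × CS(Y))`). -/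
theorem join_deformation_retract_of_punctured_product_of_cones
    (m n : ℕ) (w : Fin m → ℕ) (w' : Fin n → ℕ) (hw : ∀ i, 1 ≤ w i) (hw' : ∀ i, 1 ≤ w' i)
    (X : Set (EuclideanSpace ℂ (Fin m))) (Y : Set (EuclideanSpace ℂ (Fin n)))
    (hXne : X.Nonempty) (hYne : Y.Nonempty) (hXcl : IsClosed X) (hYcl : IsClosed Y)
    (hXinv : ∀ t : ℂ, t ≠ 0 → ∀ v ∈ X, wAct w t v ∈ X)
    (hYinv : ∀ t : ℂ, t ≠ 0 → ∀ v ∈ Y, wAct w' t v ∈ Y) :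
    ∃ H : C((↥((X ×ˢ Y) \ {(0, 0)})) × unitInterval, ↥((X ×ˢ Y) \ {(0, 0)})),
      (∀ z, H (z, 0) = z) ∧
      (∀ z, max ‖(H (z, 1)).1.1‖ ‖(H (z, 1)).1.2‖ = 1) ∧
      (∀ (z : ↥((X ×ˢ Y) \ {(0, 0)})) (t : unitInterval),
        max ‖(z : EuclideanSpace ℂ (Fin m) × EuclideanSpace ℂ (Fin n)).1‖
          ‖(z : EuclideanSpace ℂ (Fin m) × EuclideanSpace ℂ (Fin n)).2‖ = 1 →
        H (z, t) = z) := by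
  classical
  set S : Set (EuclideanSpace ℂ (Fin m) × EuclideanSpace ℂ (Fin n)) :=
    (X ×ˢ Y) \ {(0, 0)} with hS
  have hzne : ∀ z : ↥S, (z : EuclideanSpace ℂ (Fin m) × EuclideanSpace ℂ (Fin n)) ≠ 0 := by
    intro z hzero
    exact z.2.2 (by simp [hzero, Set.mem_singleton_iff, Prod.ext_iff])
  have hsC : Continuous fun z : ↥S => sFun w w' (z : EuclideanSpace ℂ (Fin m) × EuclideanSpace ℂ (Fin n)) := by
    rw [continuous_iff_continuousAt]
    intro z
    exact (continuousAt_sFun w w' hw hw' (hzne z)).comp continuous_subtype_val.continuousAt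
  set c : ↥S × unitInterval → ℝ :=
    fun p => 1 + (p.2 : ℝ) * (sFun w w' (p.1 : EuclideanSpace ℂ (Fin m) × EuclideanSpace ℂ (Fin n)) - 1) with hc
  have hcC : Continuous c := by
    apply continuous_const.add
    exact (continuous_subtype_val.comp continuous_snd).mul
      ((hsC.comp continuous_fst).sub continuous_const)
  have hcpos : ∀ p, 0 < c p := by
    rintro ⟨z, t⟩
    have hs := (sFun_spec w w' hw hw' (hzne z)).1
    have ht0 := t.2.1
    have ht1 := t.2.2
    show 0 < 1 + (t : ℝ) * (sFun w w' (z : EuclideanSpace ℂ (Fin m) × EuclideanSpace ℂ (Fin n)) - 1)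
    rcases eq_or_lt_of_le ht1 with h | h
    · rw [h]; nlinarith
    · nlinarith
  have hcne : ∀ p, ((c p : ℝ) : ℂ) ≠ 0 := by
    intro p
    simpa using (hcpos p).ne'
  have hG : ∀ p : ↥S × unitInterval,
      (wAct w ((c p : ℝ) : ℂ) (p.1 : EuclideanSpace ℂ (Fin m) × EuclideanSpace ℂ (Fin n)).1, wAct w' ((c p : ℝ) : ℂ) (p.1 : EuclideanSpace ℂ (Fin m) × EuclideanSpace ℂ (Fin n)).2) ∈ S := by
    intro p
    have hmem := p.1.2.1
    rw [Set.mem_prod] at hmem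
    refine ⟨Set.mem_prod.2 ⟨hXinv _ (hcne p) _ hmem.1, hYinv _ (hcne p) _ hmem.2⟩, ?_⟩
    simp only [Set.mem_singleton_iff]
    intro hbad
    have h1 : (p.1 : EuclideanSpace ℂ (Fin m) × EuclideanSpace ℂ (Fin n)).1 ≠ 0 ∨ (p.1 : EuclideanSpace ℂ (Fin m) × EuclideanSpace ℂ (Fin n)).2 ≠ 0 := by
      by_contra h
      push_neg at h
      exact hzne p.1 (Prod.ext h.1 h.2)
    rcases h1 with h | h
    · exact wAct_ne_zero w (hcne p) h (congrArg Prod.fst hbad)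
    · exact wAct_ne_zero w' (hcne p) h (congrArg Prod.snd hbad)
  set G : ↥S × unitInterval → ↥S := fun p =>
    ⟨(wAct w ((c p : ℝ) : ℂ) (p.1 : EuclideanSpace ℂ (Fin m) × EuclideanSpace ℂ (Fin n)).1, wAct w' ((c p : ℝ) : ℂ) (p.1 : EuclideanSpace ℂ (Fin m) × EuclideanSpace ℂ (Fin n)).2),
      hG p⟩ with hGdef
  have keyG : ∀ p : ↥S × unitInterval, c p = 1 → G p = p.1 := by
    intro p h1
    apply Subtype.ext
    show (wAct w ((c p : ℝ) : ℂ) (p.1 : EuclideanSpace ℂ (Fin m) × EuclideanSpace ℂ (Fin n)).1, wAct w' ((c p : ℝ) : ℂ) (p.1 : EuclideanSpace ℂ (Fin m) × EuclideanSpace ℂ (Fin n)).2)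
      = (p.1 : EuclideanSpace ℂ (Fin m) × EuclideanSpace ℂ (Fin n))
    rw [h1, Complex.ofReal_one, wAct_one, wAct_one]
  refine ⟨⟨G, ?_⟩, ?_, ?_, ?_⟩
  · apply Continuous.subtype_mk
    apply Continuous.prodMk
    · exact (continuous_wAct w).comp ((Complex.continuous_ofReal.comp hcC).prodMk
        ((continuous_subtype_val.comp continuous_fst).fst))
    · exact (continuous_wAct w').comp ((Complex.continuous_ofReal.comp hcC).prodMk
        ((continuous_subtype_val.comp continuous_fst).snd))
  · intro z
    apply keyG
    simp [hc]
  · intro z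
    have hc1 : c (z, 1) = sFun w w' (z : EuclideanSpace ℂ (Fin m) × EuclideanSpace ℂ (Fin n)) := by simp [hc]
    show max ‖wAct w ((c (z, 1) : ℝ) : ℂ) (z : EuclideanSpace ℂ (Fin m) × EuclideanSpace ℂ (Fin n)).1‖
      ‖wAct w' ((c (z, 1) : ℝ) : ℂ) (z : EuclideanSpace ℂ (Fin m) × EuclideanSpace ℂ (Fin n)).2‖ = 1
    rw [hc1]
    exact (sFun_spec w w' hw hw' (hzne z)).2
  · intro z t hmax
    apply keyG
    have h1 : njoint w w' (z : EuclideanSpace ℂ (Fin m) × EuclideanSpace ℂ (Fin n)) 1 = 1 := by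
      simpa [njoint, Complex.ofReal_one, wAct_one] using hmax
    have hsf : sFun w w' (z : EuclideanSpace ℂ (Fin m) × EuclideanSpace ℂ (Fin n)) = 1 := sFun_eq w w' hw hw' (hzne z) one_pos h1
    simp [hc, hsf]
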